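/- Let V be a closed subspace of a Hilbert space H, and let a(·,·) be a bounded sesquilinear form on H with continuity constant c₅ satisfying the Gårding inequality Re a(v,v) ≥ c₂‖v‖²_H − c₆‖v‖²_W for a weaker norm ‖·‖_W with ‖v‖_W ≤ ‖v‖_H. Suppose u ∈ H and u_h ∈ V satisfy the Galerkin orthogonality a(u − u_h, v_h) = 0 for all v_h ∈ V, and suppose the adjoint approximability quantity η := sup_{0≠g∈W*-representers} min_{v_h∈V} ‖S*g − v_h‖_H/‖g‖_W satisfies c₆·c₅·η ≤ c₂/2, where S* is the solution operator of the adjoint variational problem a(v, S*g) = (v,g)_W. Then quasi-optimality holds: ‖u − u_h‖_H ≤ (2c₅/c₂)·min_{v_h∈V}‖u − v_h‖_H. -/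

import Mathlib

/-- Abstract Schatz duality argument: for a bounded sesquilinear form `a` on a
Hilbert space `H` satisfying a Gårding inequality with respect to a weaker
(semi)norm `nW`, Galerkin orthogonality on a closed subspace `V`, and the adjoint
approximability smallness condition `c₆ c₅ η ≤ c₂/2`, one has quasi-optimality
`‖u − u_h‖ ≤ (2c₅/c₂) min_{v_h∈V} ‖u − v_h‖` together with the Aubin–Nitsche
estimate `‖u − u_h‖_W ≤ c₅ η ‖u − u_h‖`. -/
theorem stmt15
    {H : Type*} [NormedAddCommGroup H] [InnerProductSpace ℂ H] [CompleteSpace H]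
    (V : Submodule ℂ H) (hV : IsClosed (V : Set H))
    (a : H → H → ℂ)
    (ha_add_left : ∀ x y z, a (x + y) z = a x z + a y z)
    (ha_add_right : ∀ x y z, a x (y + z) = a x y + a x z)
    (ha_smul_left : ∀ (c : ℂ) x y, a (c • x) y = c * a x y)
    (ha_smul_right : ∀ (c : ℂ) x y, a x (c • y) = (starRingEnd ℂ) c * a x y)
    (c₂ c₅ c₆ η : ℝ) (hc₂ : 0 < c₂) (hc₅ : 0 < c₅) (hc₆ : 0 < c₆) (hη : 0 ≤ η)
    (hcont : ∀ x y, ‖a x y‖ ≤ c₅ * ‖x‖ * ‖y‖)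
    (Wip : H → H → ℂ) (nW : H → ℝ)
    (hnW_nonneg : ∀ v, 0 ≤ nW v)
    (hnW_sq : ∀ v, (Wip v v).re = nW v ^ 2)
    (hnW_le : ∀ v, nW v ≤ ‖v‖)
    (hW_cs : ∀ v g, ‖Wip v g‖ ≤ nW v * nW g)
    (hGarding : ∀ v, c₂ * ‖v‖ ^ 2 - c₆ * nW v ^ 2 ≤ (a v v).re)
    (Sstar : H → H)
    (hSstar : ∀ g v, a v (Sstar g) = Wip v g)
    (hη_approx : ∀ g : H, ∃ vh ∈ V, ‖Sstar g - vh‖ ≤ η * nW g)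
    (hsmall : c₆ * c₅ * η ≤ c₂ / 2)
    (u uh : H) (huh : uh ∈ V)
    (hGal : ∀ vh ∈ V, a (u - uh) vh = 0) :
    (∀ vh ∈ V, ‖u - uh‖ ≤ (2 * c₅ / c₂) * ‖u - vh‖) ∧
    nW (u - uh) ≤ c₅ * η * ‖u - uh‖ := by
  set e := u - uh with he
  have ha_neg_right : ∀ x z, a x (-z) = - a x z := by
    intro x z
    have h := ha_smul_right (-1) x z
    simpa using h
  have ha_sub_right : ∀ x y z, a x (y - z) = a x y - a x z := by
    intro x y z
    rw [sub_eq_add_neg, ha_add_right, ha_neg_right, sub_eq_add_neg]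
  -- Aubin–Nitsche estimate
  have hAN : nW e ≤ c₅ * η * ‖e‖ := by
    obtain ⟨vh, hvhV, hvh⟩ := hη_approx e
    have h1 : (nW e) ^ 2 = (a e (Sstar e - vh)).re := by
      rw [ha_sub_right, hGal vh hvhV, hSstar]
      simp [hnW_sq]
    have h2 : (a e (Sstar e - vh)).re ≤ c₅ * ‖e‖ * (η * nW e) := by
      calc (a e (Sstar e - vh)).re ≤ ‖a e (Sstar e - vh)‖ :=
            Complex.re_le_norm _
        _ ≤ c₅ * ‖e‖ * ‖Sstar e - vh‖ := hcont _ _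
        _ ≤ c₅ * ‖e‖ * (η * nW e) :=
            mul_le_mul_of_nonneg_left hvh (by positivity)
    rcases eq_or_lt_of_le (hnW_nonneg e) with h0 | h0
    · rw [← h0]; positivity
    · have h3 : nW e * nW e ≤ (c₅ * η * ‖e‖) * nW e := by
        nlinarith [h1 ▸ h2]
      exact le_of_mul_le_mul_right h3 h0
  refine ⟨?_, hAN⟩
  intro vh hvhV
  rcases eq_or_lt_of_le (norm_nonneg e) with h0 | h0
  · rw [← h0]; positivity
  have haee : (a e e).re ≤ c₅ * ‖e‖ * ‖u - vh‖ := by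
    have key : a e (u - vh) = a e e := by
      have h3 : a e (u - vh) = a e e + a e (uh - vh) := by
        rw [← ha_add_right]; congr 1; rw [he]; abel
      rw [h3, hGal _ (V.sub_mem huh hvhV), add_zero]
    calc (a e e).re ≤ ‖a e e‖ := Complex.re_le_norm _
      _ = ‖a e (u - vh)‖ := by rw [key]
      _ ≤ c₅ * ‖e‖ * ‖u - vh‖ := hcont _ _
  have hGard := hGarding e
  have hWsq : nW e ^ 2 ≤ (c₅ * η * ‖e‖) * ‖e‖ := by
    nlinarith [hnW_le e, hnW_nonneg e, hAN]
  have hhalf : (c₂ / 2) * ‖e‖ * ‖e‖ ≤ c₅ * ‖e‖ * ‖u - vh‖ := by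
    nlinarith [hGard, haee, hWsq, hsmall, hc₆.le, mul_le_mul_of_nonneg_left hWsq hc₆.le]
  have : (c₂ / 2) * ‖e‖ ≤ c₅ * ‖u - vh‖ := by
    have := le_of_mul_le_mul_right (by nlinarith [hhalf] : ((c₂ / 2) * ‖e‖) * ‖e‖ ≤ (c₅ * ‖u - vh‖) * ‖e‖) h0
    exact this
  rw [div_mul_eq_mul_div, le_div_iff₀ hc₂]
  nlinarith [this]
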